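/- arXiv:2403.03901 — 2 statements merged into one kernel-verified Lean document; each statement's English description precedes it below -/
import Mathlib

section
/- Let γ : [0,ℓ] → ℝ^d be an arc-length parametrization of a simple C¹ curve and s ∈ (0,1). There exists a constant c > 0 such that |γ(u) - γ(v)| ≥ c|u - v| for all u, v ∈ [0,ℓ]. -/
open MeasureTheory Real Filter Topology Set
noncomputable section

/-- An arc-length parametrized simple `C¹` curve on `[0,ℓ]` satisfies a uniform lower
bi-Lipschitz bound `|γ(u) - γ(v)| ≥ c|u - v|`. -/
theorem simple_curve_biLipschitz (d : ℕ) (ℓ : ℝ) (hℓ : 0 < ℓ) (s : ℝ)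
    (hs : s ∈ Set.Ioo (0 : ℝ) 1)
    (γ γ' : ℝ → EuclideanSpace ℝ (Fin d))
    (hderiv : ∀ u ∈ Set.Icc 0 ℓ, HasDerivAt γ (γ' u) u)
    (hC1 : ContinuousOn γ' (Set.Icc 0 ℓ))
    (harc : ∀ u ∈ Set.Icc 0 ℓ, ‖γ' u‖ = 1)
    (hsimple : Set.InjOn γ (Set.Icc 0 ℓ)) :
    ∃ c > 0, ∀ u ∈ Set.Icc 0 ℓ, ∀ v ∈ Set.Icc 0 ℓ, c * |u - v| ≤ ‖γ u - γ v‖ := by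
  have hK : IsCompact (Set.Icc (0:ℝ) ℓ) := isCompact_Icc
  have hunif : UniformContinuousOn γ' (Set.Icc 0 ℓ) :=
    hK.uniformContinuousOn_of_continuous hC1
  rw [Metric.uniformContinuousOn_iff] at hunif
  obtain ⟨δ₀, hδ₀, hδ⟩ := hunif (1/2) (by norm_num)
  set δ : ℝ := min (δ₀/2) ℓ with hδdef
  have hδpos : 0 < δ := lt_min (by linarith) hℓ
  have hδℓ : δ ≤ ℓ := min_le_right _ _
  -- local estimate
  have hlocal : ∀ u ∈ Set.Icc (0:ℝ) ℓ, ∀ v ∈ Set.Icc (0:ℝ) ℓ, |u - v| ≤ δ →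
      (1/2) * |u - v| ≤ ‖γ u - γ v‖ := by
    intro u hu v hv huv
    have hsub : Set.Icc (min u v) (max u v) ⊆ Set.Icc 0 ℓ :=
      Set.Icc_subset_Icc (le_min hu.1 hv.1) (max_le hu.2 hv.2)
    have hconv : Convex ℝ (Set.Icc (min u v) (max u v)) := convex_Icc _ _
    have key : ‖(γ u - u • γ' v) - (γ v - v • γ' v)‖ ≤ (1/2) * ‖u - v‖ := by
      refine hconv.norm_image_sub_le_of_norm_hasDerivWithin_le
        (f := fun t => γ t - t • γ' v) (f' := fun t => γ' t - γ' v) ?_ ?_ ?_ ?_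
      · intro x hx
        have := ((hderiv x (hsub hx)).sub ((hasDerivAt_id x).smul_const (γ' v))).hasDerivWithinAt
          (s := Set.Icc (min u v) (max u v))
        simpa only [Pi.sub_def, id, one_smul] using this
      · intro x hx
        have hxv : dist x v < δ₀ := by
          rw [Real.dist_eq]
          have h1 : |x - v| ≤ max u v - min u v := by
            rw [abs_le]
            constructor
            · linarith [hx.1, hx.2, min_le_right u v, le_max_right u v]
            · linarith [hx.1, hx.2, min_le_right u v, le_max_right u v]
          rw [max_sub_min_eq_abs] at h1
          have h2 : |u - v| ≤ δ₀/2 := le_trans huv (min_le_left _ _)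
          have h3 : |u - v| = |v - u| := abs_sub_comm u v
          linarith
        have := hδ x (hsub hx) v hv hxv
        rw [dist_eq_norm] at this
        linarith
      · exact Set.mem_Icc.mpr ⟨min_le_right u v, le_max_right u v⟩
      · exact Set.mem_Icc.mpr ⟨min_le_left u v, le_max_left u v⟩
    have hrw : (γ u - u • γ' v) - (γ v - v • γ' v) = (γ u - γ v) - (u - v) • γ' v := by
      rw [sub_smul]; abel
    rw [hrw] at key
    have hnorm : ‖(u - v) • γ' v‖ = |u - v| := by
      rw [norm_smul, harc v hv, Real.norm_eq_abs, mul_one]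
    have htri : ‖(u - v) • γ' v‖ - ‖γ u - γ v‖ ≤ ‖(γ u - γ v) - (u - v) • γ' v‖ := by
      exact (norm_sub_norm_le _ _).trans (le_of_eq (norm_sub_rev _ _))
    have : ‖u - v‖ = |u - v| := Real.norm_eq_abs _
    rw [this] at key
    linarith
  -- global part
  have hγc : ContinuousOn γ (Set.Icc 0 ℓ) := fun u hu =>
    (hderiv u hu).continuousAt.continuousWithinAt
  set S : Set (ℝ × ℝ) :=
    (Set.Icc 0 ℓ ×ˢ Set.Icc 0 ℓ) ∩ {p : ℝ × ℝ | δ ≤ |p.1 - p.2|} with hSdef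
  have hScomp : IsCompact S := by
    apply (hK.prod hK).inter_right
    have : IsClosed {p : ℝ × ℝ | δ ≤ |p.1 - p.2|} := by
      have hc : Continuous fun p : ℝ × ℝ => |p.1 - p.2| :=
        (continuous_fst.sub continuous_snd).abs
      exact isClosed_le continuous_const hc
    exact this
  have hSne : S.Nonempty := by
    refine ⟨(0, δ), ⟨⟨Set.left_mem_Icc.mpr hℓ.le, Set.mem_Icc.mpr ⟨hδpos.le, hδℓ⟩⟩, ?_⟩⟩
    simp [abs_of_nonpos, hδpos.le]
  have hgc : ContinuousOn (fun p : ℝ × ℝ => ‖γ p.1 - γ p.2‖) S := by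
    apply ContinuousOn.norm
    apply ContinuousOn.sub
    · exact hγc.comp continuous_fst.continuousOn (fun p hp => hp.1.1)
    · exact hγc.comp continuous_snd.continuousOn (fun p hp => hp.1.2)
  obtain ⟨p₀, hp₀, hmin⟩ := hScomp.exists_isMinOn hSne hgc
  set m : ℝ := ‖γ p₀.1 - γ p₀.2‖ with hm
  have hmpos : 0 < m := by
    rcases lt_or_eq_of_le (norm_nonneg (γ p₀.1 - γ p₀.2)) with h | h
    · exact h
    · exfalso
      have heq : γ p₀.1 = γ p₀.2 := by
        have := sub_eq_zero.mp (norm_eq_zero.mp h.symm)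
        exact this
      have := hsimple hp₀.1.1 hp₀.1.2 heq
      have hδ' := hp₀.2
      simp only [Set.mem_setOf_eq, this, sub_self, abs_zero] at hδ'
      linarith
  refine ⟨min (1/2) (m/ℓ), lt_min (by norm_num) (div_pos hmpos hℓ), ?_⟩
  intro u hu v hv
  rcases le_or_gt |u - v| δ with h | h
  · calc min (1/2) (m/ℓ) * |u - v| ≤ (1/2) * |u - v| := by
          apply mul_le_mul_of_nonneg_right (min_le_left _ _) (abs_nonneg _)
      _ ≤ ‖γ u - γ v‖ := hlocal u hu v hv h
  · have huvS : (u, v) ∈ S := ⟨⟨hu, hv⟩, h.le⟩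
    have hmle : m ≤ ‖γ u - γ v‖ := isMinOn_iff.mp hmin (u, v) huvS
    have huvℓ : |u - v| ≤ ℓ := by
      rw [abs_le]; constructor <;> [linarith [hu.1, hv.2]; linarith [hu.2, hv.1]]
    calc min (1/2) (m/ℓ) * |u - v| ≤ (m/ℓ) * ℓ := by
          apply mul_le_mul (min_le_right _ _) huvℓ (abs_nonneg _)
          positivity
      _ = m := div_mul_cancel₀ m hℓ.ne'
      _ ≤ ‖γ u - γ v‖ := hmle
end
end

section
/- Let γ : [−ℓ/2, ℓ/2] → ℝ^d be an arc-length parametrization of a simple C² curve. Then for every u ∈ (−ℓ/2, ℓ/2), lim_{s↑1} (1−s)·k_s(u,γ) = −γ''(u), where k_s(u,γ) := s ∫ [ ((γ(u)−γ(v))·γ'(u))γ'(v) − (γ'(u)·γ'(v))(γ(u)−γ(v)) ] / |γ(u)−γ(v)|^{2+s} dv, the integral being over v ∈ [−ℓ/2, ℓ/2]. -/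
open MeasureTheory Real Filter Topology Set
open scoped RealInnerProductSpace
noncomputable section


lemma abs_sub_le_of_mem_uIcc' {u v t : ℝ} (ht : t ∈ Set.uIcc u v) : |t - u| ≤ |v - u| := by
  rcases le_total u v with h | h
  · rw [Set.uIcc_of_le h] at ht
    rw [abs_of_nonneg (by linarith [ht.1]), abs_of_nonneg (by linarith)]
    linarith [ht.2]
  · rw [Set.uIcc_of_ge h] at ht
    rw [abs_of_nonpos (by linarith [ht.2]), abs_of_nonpos (by linarith)]
    linarith [ht.1]

lemma abs_sub_one_le_aux {A η : ℝ} (h1 : 1 - 14 * η ≤ A) (h2 : A ≤ 1 + 14 * η) :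
    |A - 1| ≤ 14 * η :=
  abs_le.2 ⟨by linarith, by linarith⟩

lemma ratio_est {x t s η : ℝ} (ht : 0 < t) (hη : 0 ≤ η) (hη2 : η ≤ 1/2)
    (hs0 : 0 ≤ s) (hs1 : s ≤ 1)
    (hl : (1 - η) * t ≤ x) (hu : x ≤ (1 + η) * t) :
    |t ^ 2 * (x ^ (2 + s))⁻¹ - t ^ (-s)| ≤ 14 * η * t ^ (-s) := by
  have hx : 0 < x := lt_of_lt_of_le (by nlinarith) hl
  set ρ := t / x with hρ
  have hρ0 : 0 < ρ := div_pos ht hx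
  have hρl : 1 - η ≤ ρ := by
    rw [hρ, le_div_iff₀ hx]; nlinarith
  have hρu : ρ ≤ 1 + 2 * η := by
    rw [hρ, div_le_iff₀ hx]; nlinarith
  have hxs : (0:ℝ) < x ^ (2 + s) := Real.rpow_pos_of_pos hx _
  have hts2 : (0:ℝ) < t ^ (2 + s) := Real.rpow_pos_of_pos ht _
  have key : t ^ 2 * (x ^ (2 + s))⁻¹ = t ^ (-s) * ρ ^ (2 + s) := by
    have h1 : ρ ^ (2 + s) = t ^ (2 + s) / x ^ (2 + s) := by
      rw [hρ, Real.div_rpow ht.le hx.le]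
    have h2 : t ^ (-s) * t ^ (2 + s) = (t:ℝ) ^ (2:ℕ) := by
      rw [← Real.rpow_add ht, ← Real.rpow_natCast t 2]
      norm_num
    rw [h1, div_eq_mul_inv, ← mul_assoc, h2]
  clear_value ρ
  have hts : (0:ℝ) < t ^ (-s) := Real.rpow_pos_of_pos ht _
  have a1 : ρ ^ (2 + s) ≤ (1 + 2 * η) ^ (2 + s) :=
    Real.rpow_le_rpow hρ0.le hρu (by linarith)
  have a2 : (1 + 2 * η) ^ (2 + s) ≤ (1 + 2 * η) ^ ((3:ℝ)) :=
    Real.rpow_le_rpow_of_exponent_le (by linarith) (by linarith)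
  have a3 : (1 + 2 * η) ^ ((3:ℝ)) = (1 + 2 * η) ^ (3:ℕ) := by
    rw [← Real.rpow_natCast (1 + 2*η) 3]; norm_num
  have b1 : (1 - η) ^ ((3:ℝ)) ≤ ρ ^ (2 + s) := by
    calc (1 - η) ^ ((3:ℝ)) ≤ (1 - η) ^ (2 + s) :=
          Real.rpow_le_rpow_of_exponent_ge (by linarith) (by linarith) (by linarith)
      _ ≤ ρ ^ (2 + s) := Real.rpow_le_rpow (by linarith) hρl (by linarith)
  have b2 : ((1 - η):ℝ) ^ ((3:ℝ)) = (1 - η) ^ (3:ℕ) := by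
    rw [← Real.rpow_natCast (1 - η) 3]; norm_num
  have hc1 : ((1 + 2 * η):ℝ) ^ (3:ℕ) ≤ 1 + 14 * η := by
    nlinarith [mul_nonneg hη (by linarith : (0:ℝ) ≤ 1/2 - η),
      mul_nonneg (mul_nonneg hη hη) (by linarith : (0:ℝ) ≤ 1/2 - η)]
  have hc2 : (1:ℝ) - 14 * η ≤ ((1 - η):ℝ) ^ (3:ℕ) := by
    nlinarith [mul_nonneg hη (by linarith : (0:ℝ) ≤ 1 - η),
      mul_nonneg (mul_nonneg hη hη) (by linarith : (0:ℝ) ≤ 1 - η)]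
  have hc1' : (1 + 2 * η) ^ ((3:ℝ)) ≤ 1 + 14 * η := by rw [a3]; exact hc1
  have hc2' : (1:ℝ) - 14 * η ≤ ((1 - η):ℝ) ^ ((3:ℝ)) := by rw [b2]; exact hc2
  have habs : |ρ ^ (2 + s) - 1| ≤ 14 * η :=
    abs_sub_one_le_aux (le_trans hc2' b1) (le_trans a1 (le_trans a2 hc1'))
  rw [key]
  have hfac : t ^ (-s) * ρ ^ (2 + s) - t ^ (-s) = t ^ (-s) * (ρ ^ (2 + s) - 1) := by ring
  rw [hfac, abs_mul, abs_of_pos hts]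
  calc t ^ (-s) * |ρ ^ (2 + s) - 1| ≤ t ^ (-s) * (14 * η) :=
        mul_le_mul_of_nonneg_left habs hts.le
    _ = 14 * η * t ^ (-s) := by ring

lemma algebra_est {E : Type*} [NormedAddCommGroup E] [InnerProductSpace ℝ E]
    (e w p q r1 r2 : E) (t ω : ℝ)
    (he : ‖e‖ = 1) (hqn : ‖q‖ = 1) (hew : ⟪e, w⟫ = 0)
    (hp : ‖p‖ ≤ |t|) (ht : |t| ≤ 1)
    (hr1 : p = r1 - t • e - (t ^ 2 / 2) • w) (hn1 : ‖r1‖ ≤ ω * t ^ 2)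
    (hr2 : q = r2 + e + t • w) (hn2 : ‖r2‖ ≤ ω * |t|) :
    ‖(⟪p, e⟫ • q - ⟪e, q⟫ • p) + (t ^ 2 / 2) • w‖ ≤ 4 * ω * t ^ 2 := by
  have hee : ⟪e, e⟫ = (1:ℝ) := by
    rw [real_inner_self_eq_norm_sq, he]; norm_num
  have hwe : ⟪w, e⟫ = (0:ℝ) := by rw [real_inner_comm]; exact hew
  have hpe : ⟪p, e⟫ = -t + ⟪r1, e⟫ := by
    rw [hr1]
    simp only [inner_sub_left, inner_smul_left, hee, hwe, starRingEnd_apply, star_trivial]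
    ring
  have heq : ⟪e, q⟫ = 1 + ⟪e, r2⟫ := by
    rw [hr2]
    simp only [inner_add_right, inner_smul_right, hee, hew, starRingEnd_apply, star_trivial]
    ring
  have key : (⟪p, e⟫ • q - ⟪e, q⟫ • p) + (t ^ 2 / 2) • w
      = ⟪r1, e⟫ • q - t • r2 - ⟪e, r2⟫ • p - r1 := by
    rw [hpe, heq]
    nth_rewrite 1 [hr2]
    nth_rewrite 2 [hr1]
    rw [hr1, hr2]
    module
  rw [key]
  have h1 : |⟪r1, e⟫| ≤ ω * t ^ 2 := by
    calc |⟪r1, e⟫| ≤ ‖r1‖ * ‖e‖ := abs_real_inner_le_norm r1 e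
      _ = ‖r1‖ := by rw [he, mul_one]
      _ ≤ ω * t ^ 2 := hn1
  have h2 : |⟪e, r2⟫| ≤ ω * |t| := by
    calc |⟪e, r2⟫| ≤ ‖e‖ * ‖r2‖ := abs_real_inner_le_norm e r2
      _ = ‖r2‖ := by rw [he, one_mul]
      _ ≤ ω * |t| := hn2
  have htri : ‖⟪r1, e⟫ • q - t • r2 - ⟪e, r2⟫ • p - r1‖
      ≤ |⟪r1, e⟫| * ‖q‖ + |t| * ‖r2‖ + |⟪e, r2⟫| * ‖p‖ + ‖r1‖ := by
    calc ‖⟪r1, e⟫ • q - t • r2 - ⟪e, r2⟫ • p - r1‖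
        ≤ ‖⟪r1, e⟫ • q - t • r2 - ⟪e, r2⟫ • p‖ + ‖r1‖ := norm_sub_le _ _
      _ ≤ ‖⟪r1, e⟫ • q - t • r2‖ + ‖⟪e, r2⟫ • p‖ + ‖r1‖ := by
          linarith [norm_sub_le (⟪r1, e⟫ • q - t • r2) (⟪e, r2⟫ • p)]
      _ ≤ ‖⟪r1, e⟫ • q‖ + ‖t • r2‖ + ‖⟪e, r2⟫ • p‖ + ‖r1‖ := by
          linarith [norm_sub_le (⟪r1, e⟫ • q) (t • r2)]
      _ = |⟪r1, e⟫| * ‖q‖ + |t| * ‖r2‖ + |⟪e, r2⟫| * ‖p‖ + ‖r1‖ := by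
          rw [norm_smul, norm_smul, norm_smul, Real.norm_eq_abs, Real.norm_eq_abs,
            Real.norm_eq_abs]
  have habs2 : |t| * |t| = t ^ 2 := by rw [← abs_mul, abs_mul_self]; ring
  have hr2n : (0:ℝ) ≤ ω * |t| := le_trans (norm_nonneg _) hn2
  have hp0 : (0:ℝ) ≤ ‖p‖ := norm_nonneg _
  calc ‖⟪r1, e⟫ • q - t • r2 - ⟪e, r2⟫ • p - r1‖
      ≤ |⟪r1, e⟫| * ‖q‖ + |t| * ‖r2‖ + |⟪e, r2⟫| * ‖p‖ + ‖r1‖ := htri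
    _ ≤ (ω * t ^ 2) * 1 + |t| * (ω * |t|) + (ω * |t|) * |t| + ω * t ^ 2 := by
        have e1 : |⟪r1, e⟫| * ‖q‖ ≤ (ω * t ^ 2) * 1 := by
          rw [hqn]; exact mul_le_mul_of_nonneg_right h1 zero_le_one
        have e2 : |t| * ‖r2‖ ≤ |t| * (ω * |t|) :=
          mul_le_mul_of_nonneg_left hn2 (abs_nonneg t)
        have e3 : |⟪e, r2⟫| * ‖p‖ ≤ (ω * |t|) * |t| :=
          mul_le_mul h2 hp (norm_nonneg _) hr2n
        linarith
    _ = 4 * ω * t ^ 2 := by linear_combination 2 * ω * habs2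

lemma intervalIntegrable_abs_rpow_right {s u : ℝ} (hs0 : 0 < s) (hs1 : s < 1) (δ : ℝ) (hδ : 0 < δ) :
    IntervalIntegrable (fun v : ℝ => |v - u| ^ (-s)) volume u (u + δ) := by
  have h1 : IntervalIntegrable (fun x : ℝ => x ^ (-s)) volume 0 δ :=
    intervalIntegral.intervalIntegrable_rpow' (by linarith)
  have h2 : IntervalIntegrable (fun x : ℝ => (x - u) ^ (-s)) volume u (u + δ) := by
    simpa [add_comm] using h1.comp_sub_right u
  rw [intervalIntegrable_iff, Set.uIoc_of_le (by linarith : u ≤ u + δ)] at h2 ⊢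
  refine h2.congr_fun ?_ measurableSet_Ioc
  intro v hv
  have : |v - u| = v - u := abs_of_pos (by linarith [hv.1])
  simp [this]

lemma intervalIntegrable_abs_rpow_left {s u : ℝ} (hs0 : 0 < s) (hs1 : s < 1) (δ : ℝ) (hδ : 0 < δ) :
    IntervalIntegrable (fun v : ℝ => |v - u| ^ (-s)) volume (u - δ) u := by
  have h1 : IntervalIntegrable (fun x : ℝ => x ^ (-s)) volume 0 δ :=
    intervalIntegral.intervalIntegrable_rpow' (by linarith)
  have h2 : IntervalIntegrable (fun x : ℝ => (u - x) ^ (-s)) volume (u - δ) u := by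
    simpa using (h1.comp_sub_left u).symm
  rw [intervalIntegrable_iff, Set.uIoc_of_le (by linarith : u - δ ≤ u)] at h2 ⊢
  refine h2.congr_fun ?_ measurableSet_Ioc
  intro v hv
  have : |v - u| = u - v := by
    rw [abs_of_nonpos (by linarith [hv.2] : v - u ≤ 0), neg_sub]
  simp [this]

lemma integral_abs_rpow_sub_right {s u δ : ℝ} (hs0 : 0 < s) (hs1 : s < 1) (hδ : 0 < δ) :
    ∫ v in u..(u + δ), |v - u| ^ (-s) = δ ^ (1 - s) / (1 - s) := by
  have hcg : Set.EqOn (fun v : ℝ => |v - u| ^ (-s)) (fun v : ℝ => (v - u) ^ (-s))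
      (Set.uIcc u (u + δ)) := by
    intro v hv
    rw [Set.uIcc_of_le (by linarith : u ≤ u + δ)] at hv
    simp only
    rw [abs_of_nonneg (by linarith [hv.1] : (0:ℝ) ≤ v - u)]
  rw [intervalIntegral.integral_congr hcg,
    intervalIntegral.integral_comp_sub_right (fun x : ℝ => x ^ (-s)) u]
  simp only [sub_self, add_sub_cancel_left]
  rw [integral_rpow (Or.inl (by linarith)),
    Real.zero_rpow (by intro h; nlinarith : -s + 1 ≠ 0),
    show (-s + 1) = (1 - s) by ring]
  ring

lemma integral_abs_rpow_sub_left {s u δ : ℝ} (hs0 : 0 < s) (hs1 : s < 1) (hδ : 0 < δ) :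
    ∫ v in (u - δ)..u, |v - u| ^ (-s) = δ ^ (1 - s) / (1 - s) := by
  have hcg : Set.EqOn (fun v : ℝ => |v - u| ^ (-s)) (fun v : ℝ => (u - v) ^ (-s))
      (Set.uIcc (u - δ) u) := by
    intro v hv
    rw [Set.uIcc_of_le (by linarith : u - δ ≤ u)] at hv
    simp only
    rw [abs_of_nonpos (by linarith [hv.2] : v - u ≤ 0), neg_sub]
  rw [intervalIntegral.integral_congr hcg,
    intervalIntegral.integral_comp_sub_left (fun x : ℝ => x ^ (-s)) u]
  simp only [sub_self, sub_sub_cancel]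
  rw [integral_rpow (Or.inl (by linarith)),
    Real.zero_rpow (by intro h; nlinarith : -s + 1 ≠ 0),
    show (-s + 1) = (1 - s) by ring]
  ring

lemma integrableOn_abs_rpow_Icc {s u δ : ℝ} (hs0 : 0 < s) (hs1 : s < 1) (hδ : 0 < δ) :
    IntegrableOn (fun v : ℝ => |v - u| ^ (-s)) (Set.Icc (u - δ) (u + δ)) volume := by
  have h : IntervalIntegrable (fun v : ℝ => |v - u| ^ (-s)) volume (u - δ) (u + δ) :=
    (intervalIntegrable_abs_rpow_left (u := u) hs0 hs1 δ hδ).trans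
      (intervalIntegrable_abs_rpow_right (u := u) hs0 hs1 δ hδ)
  rw [intervalIntegrable_iff'] at h
  simpa [Set.uIcc_of_le (by linarith : u - δ ≤ u + δ)] using h

lemma integral_abs_rpow_Icc {s u δ : ℝ} (hs0 : 0 < s) (hs1 : s < 1) (hδ : 0 < δ) :
    ∫ v in Set.Icc (u - δ) (u + δ), |v - u| ^ (-s) = 2 * (δ ^ (1 - s) / (1 - s)) := by
  rw [MeasureTheory.integral_Icc_eq_integral_Ioc,
    ← intervalIntegral.integral_of_le (by linarith : u - δ ≤ u + δ),
    ← intervalIntegral.integral_add_adjacent_intervals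
      (intervalIntegrable_abs_rpow_left hs0 hs1 δ hδ)
      (intervalIntegrable_abs_rpow_right hs0 hs1 δ hδ),
    integral_abs_rpow_sub_left hs0 hs1 hδ, integral_abs_rpow_sub_right hs0 hs1 hδ]
  ring

/-- The `s`-fractional curvature of a simple `C²` arc-length parametrized curve
`γ : [−ℓ/2, ℓ/2] → ℝ^d` at an interior parameter `u`. -/
def fracCurvature (d : ℕ) (ℓ s : ℝ) (γ γ' : ℝ → EuclideanSpace ℝ (Fin d)) (u : ℝ) :
    EuclideanSpace ℝ (Fin d) :=
  s • ∫ v in Set.Icc (-(ℓ / 2)) (ℓ / 2),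
    (‖γ u - γ v‖ ^ (2 + s))⁻¹ •
      (⟪γ u - γ v, γ' u⟫ • γ' v - ⟪γ' u, γ' v⟫ • (γ u - γ v))

set_option maxHeartbeats 1000000 in
/-- For a simple `C²` arc-length parametrized curve,
`(1−s)·k_s(u,γ) → −γ''(u)` as `s ↑ 1` at every interior parameter `u`. -/
theorem fractional_curvature_limit_s_to_one (d : ℕ) (ℓ : ℝ) (hℓ : 0 < ℓ)
    (γ γ' γ'' : ℝ → EuclideanSpace ℝ (Fin d))
    (hderiv : ∀ u ∈ Set.Icc (-(ℓ / 2)) (ℓ / 2), HasDerivAt γ (γ' u) u)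
    (hderiv' : ∀ u ∈ Set.Icc (-(ℓ / 2)) (ℓ / 2), HasDerivAt γ' (γ'' u) u)
    (hC2 : ContinuousOn γ'' (Set.Icc (-(ℓ / 2)) (ℓ / 2)))
    (harc : ∀ u ∈ Set.Icc (-(ℓ / 2)) (ℓ / 2), ‖γ' u‖ = 1)
    (hsimple : Set.InjOn γ (Set.Icc (-(ℓ / 2)) (ℓ / 2))) :
    ∀ u ∈ Set.Ioo (-(ℓ / 2)) (ℓ / 2),
      Filter.Tendsto (fun s : ℝ => (1 - s) • fracCurvature d ℓ s γ γ' u)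
        (nhdsWithin 1 (Set.Iio 1)) (nhds (-γ'' u)) := by
  intro u hu
  set I : Set ℝ := Set.Icc (-(ℓ / 2)) (ℓ / 2) with hIdef
  have huI : u ∈ I := Set.mem_Icc.2 ⟨hu.1.le, hu.2.le⟩
  have hIconv : Convex ℝ I := convex_Icc _ _
  have hImeas : MeasurableSet I := measurableSet_Icc
  have hγc : ContinuousOn γ I := fun v hv => ((hderiv v hv).continuousAt).continuousWithinAt
  have hγ'c : ContinuousOn γ' I := fun v hv => ((hderiv' v hv).continuousAt).continuousWithinAt
  have hIn : I ∈ 𝓝 u := Icc_mem_nhds hu.1 hu.2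
  set W : ℝ := ‖γ'' u‖ with hWdef
  have hW : 0 ≤ W := norm_nonneg _
  -- orthogonality of γ' u and γ'' u
  have hortho : ⟪γ' u, γ'' u⟫ = 0 := by
    have hD : HasDerivAt (fun t => ⟪γ' t, γ' t⟫)
        (⟪γ' u, γ'' u⟫ + ⟪γ'' u, γ' u⟫) u :=
      HasDerivAt.inner ℝ (hderiv' u huI) (hderiv' u huI)
    have hconst : (fun t : ℝ => ⟪γ' t, γ' t⟫) =ᶠ[𝓝 u] fun _ => (1:ℝ) := by
      filter_upwards [hIn] with t htI
      rw [real_inner_self_eq_norm_sq, harc t htI]; norm_num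
    have hD0 : HasDerivAt (fun t : ℝ => ⟪γ' t, γ' t⟫) 0 u :=
      (hasDerivAt_const u (1:ℝ)).congr_of_eventuallyEq hconst
    have huniq := hD.unique hD0
    have hcomm : ⟪γ'' u, γ' u⟫ = ⟪γ' u, γ'' u⟫ := real_inner_comm _ _
    linarith [huniq, hcomm]
  -- chord upper bound
  have hchord : ∀ v ∈ I, ‖γ u - γ v‖ ≤ |v - u| := by
    intro v hv
    have h := hIconv.norm_image_sub_le_of_norm_hasDerivWithin_le
      (fun x hx => (hderiv x hx).hasDerivWithinAt)
      (fun x hx => le_of_eq (harc x hx)) hv huI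
    rw [one_mul] at h
    calc ‖γ u - γ v‖ ≤ ‖u - v‖ := h
      _ = |v - u| := by rw [Real.norm_eq_abs, abs_sub_comm]
  -- minimum distance on the far region (for any positive radius r)
  have hfarmin : ∀ r : ℝ, 0 < r → r ≤ ℓ/2 - u →
      ∃ m : ℝ, 0 < m ∧ ∀ v ∈ I, r ≤ |v - u| → m ≤ ‖γ u - γ v‖ := by
    intro r hr hrl
    have hKcl : IsClosed {v : ℝ | r ≤ |v - u|} := by
      have : Continuous fun v : ℝ => |v - u| := (continuous_id.sub continuous_const).abs
      exact isClosed_le continuous_const this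
    have hKcpt : IsCompact (I ∩ {v | r ≤ |v - u|}) := isCompact_Icc.inter_right hKcl
    have hKne : (I ∩ {v | r ≤ |v - u|}).Nonempty := by
      refine ⟨ℓ/2, Set.mem_Icc.2 ⟨by linarith, le_refl _⟩, ?_⟩
      simp only [Set.mem_setOf_eq]
      rw [abs_of_nonneg (by linarith [hu.2])]
      linarith
    obtain ⟨v₀, hv₀K, hv₀min⟩ := hKcpt.exists_isMinOn hKne
      ((continuousOn_const.sub (hγc.mono Set.inter_subset_left)).norm)
    refine ⟨‖γ u - γ v₀‖, ?_, fun v hv hd => hv₀min (Set.mem_inter hv hd)⟩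
    rw [norm_pos_iff, sub_ne_zero]
    intro hEq
    have huv : u = v₀ := hsimple huI hv₀K.1 hEq
    have := hv₀K.2
    rw [Set.mem_setOf_eq, ← huv, sub_self, abs_zero] at this
    linarith
  -- the integrand
  set F : ℝ → ℝ → EuclideanSpace ℝ (Fin d) := fun s v =>
    (‖γ u - γ v‖ ^ (2 + s))⁻¹ •
      (⟪γ u - γ v, γ' u⟫ • γ' v - ⟪γ' u, γ' v⟫ • (γ u - γ v)) with hFdef
  have hfrac : ∀ s : ℝ, fracCurvature d ℓ s γ γ' u = s • ∫ v in I, F s v := fun s => rfl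
  -- a.e. strong measurability of the integrand
  have hne : ∀ v ∈ I \ {u}, γ u - γ v ≠ 0 := by
    intro v hv h0
    rw [sub_eq_zero] at h0
    exact hv.2 (hsimple huI hv.1 h0).symm
  have hAESM : ∀ s : ℝ, 0 ≤ 2 + s → AEStronglyMeasurable (F s) (volume.restrict I) := by
    intro s hs2
    have h1 : ContinuousOn (fun v => γ u - γ v) (I \ {u}) :=
      continuousOn_const.sub (hγc.mono Set.diff_subset)
    have h2 : ContinuousOn γ' (I \ {u}) := hγ'c.mono Set.diff_subset
    have h3 : ContinuousOn (fun v => (‖γ u - γ v‖ ^ (2 + s))⁻¹) (I \ {u}) := by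
      apply ContinuousOn.inv₀
      · exact h1.norm.rpow_const (fun x _ => Or.inr hs2)
      · intro v hv
        exact ne_of_gt (Real.rpow_pos_of_pos (norm_pos_iff.2 (hne v hv)) _)
    have hcF : ContinuousOn (F s) (I \ {u}) := by
      rw [hFdef]; exact h3.smul (((h1.inner (𝕜 := ℝ) continuousOn_const).smul h2).sub
        ((continuousOn_const.inner (𝕜 := ℝ) h2).smul h1))
    have hIu_ae : (I \ {u} : Set ℝ) =ᵐ[volume] I := by
      rw [MeasureTheory.diff_ae_eq_self]
      exact measure_mono_null Set.inter_subset_right Real.volume_singleton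
    have h : AEStronglyMeasurable (F s) (volume.restrict (I \ {u})) :=
      hcF.aestronglyMeasurable (hImeas.diff (measurableSet_singleton u))
    rwa [Measure.restrict_congr_set hIu_ae] at h
  -- start the ε-argument
  rw [Metric.tendsto_nhds]
  intro ε hε
  set ε₂ : ℝ := ε / 8 with hε₂def
  have hε₂ : 0 < ε₂ := by positivity
  set ω : ℝ := min 1 (ε₂ / 64) with hωdef
  have hω0 : 0 < ω := lt_min one_pos (by positivity)
  have hω1 : ω ≤ 1 := min_le_left _ _
  have hωε : ω ≤ ε₂ / 64 := min_le_right _ _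
  have hcontu : ContinuousAt γ'' u := hC2.continuousAt hIn
  obtain ⟨δ₁, hδ₁pos, hδ₁⟩ := Metric.continuousAt_iff.1 hcontu ω hω0
  set δ : ℝ := min (min (ℓ/2 - u) (u + ℓ/2))
      (min (min 1 (δ₁/2)) (min (1/(W+2)) (ε₂/(14 * (W/2+1) * (W+1))))) with hδdef
  have hδpos : 0 < δ := by
    refine lt_min (lt_min (by linarith [hu.2]) (by linarith [hu.1]))
      (lt_min (lt_min one_pos (by linarith)) (lt_min (by positivity) (by positivity)))
  have hδ1 : δ ≤ ℓ/2 - u := le_trans (min_le_left _ _) (min_le_left _ _)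
  have hδ2 : δ ≤ u + ℓ/2 := le_trans (min_le_left _ _) (min_le_right _ _)
  have hδ3 : δ ≤ 1 := le_trans (min_le_right _ _) (le_trans (min_le_left _ _) (min_le_left _ _))
  have hδ4 : δ ≤ δ₁/2 := le_trans (min_le_right _ _) (le_trans (min_le_left _ _) (min_le_right _ _))
  have hδ5 : δ ≤ 1/(W+2) := le_trans (min_le_right _ _) (le_trans (min_le_right _ _) (min_le_left _ _))
  have hδ6 : δ ≤ ε₂/(14 * (W/2+1) * (W+1)) :=
    le_trans (min_le_right _ _) (le_trans (min_le_right _ _) (min_le_right _ _))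
  set J : Set ℝ := Set.Icc (u - δ) (u + δ) with hJdef
  have hJI : J ⊆ I := by
    intro v hv
    rw [hJdef, Set.mem_Icc] at hv
    exact Set.mem_Icc.2 ⟨by linarith [hv.1], by linarith [hv.2]⟩
  have huJ : u ∈ J := Set.mem_Icc.2 ⟨by linarith, by linarith⟩
  have hJconv : Convex ℝ J := convex_Icc _ _
  -- modulus of continuity bound for γ'' on J
  have hω' : ∀ v ∈ J, ‖γ'' v - γ'' u‖ ≤ ω := by
    intro v hv
    rw [hJdef, Set.mem_Icc] at hv
    have hd : dist v u < δ₁ := by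
      rw [Real.dist_eq]
      have h9 : |v - u| ≤ δ := abs_le.2 ⟨by linarith [hv.1], by linarith [hv.2]⟩
      linarith
    have := hδ₁ hd
    rw [dist_eq_norm] at this
    exact this.le
  -- first-order Taylor bound for γ'
  have hTa : ∀ v ∈ J, ‖(γ' v - (v - u) • γ'' u) - γ' u‖ ≤ ω * |v - u| := by
    have hder : ∀ x ∈ J, HasDerivWithinAt (fun t => γ' t - (t - u) • γ'' u)
        (γ'' x - γ'' u) J x := by
      intro x hx
      have h1 : HasDerivAt (fun t : ℝ => γ' t - (t - u) • γ'' u)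
          (γ'' x - (1:ℝ) • γ'' u) x :=
        (hderiv' x (hJI hx)).sub (((hasDerivAt_id x).sub_const u).smul_const (γ'' u))
      simpa using h1.hasDerivWithinAt
    intro v hv
    have h2 := hJconv.norm_image_sub_le_of_norm_hasDerivWithin_le hder hω' huJ hv
    simp only [sub_self, zero_smul, sub_zero] at h2
    calc ‖(γ' v - (v - u) • γ'' u) - γ' u‖ ≤ ω * ‖v - u‖ := h2
      _ = ω * |v - u| := by rw [Real.norm_eq_abs]
  -- second-order Taylor bound for γ
  have hTb : ∀ v ∈ J, ‖(γ v - (v - u) • γ' u - (((v - u)^2)/2) • γ'' u) - γ u‖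
      ≤ ω * (v - u)^2 := by
    intro v hv
    have hsub : Set.uIcc u v ⊆ J := Set.uIcc_subset_Icc huJ hv
    have hconv : Convex ℝ (Set.uIcc u v) := convex_uIcc u v
    have hder : ∀ x ∈ Set.uIcc u v,
        HasDerivWithinAt (fun t => γ t - (t - u) • γ' u - (((t - u)^2)/2) • γ'' u)
        (γ' x - γ' u - (x - u) • γ'' u) (Set.uIcc u v) x := by
      intro x hx
      have h1 : HasDerivAt (fun t : ℝ => ((t - u)^2)/2) (x - u) x := by
        have h0 := (((hasDerivAt_id x).sub_const u).fun_pow 2).div_const 2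
        exact h0.congr_deriv (by norm_num)
      have h2 : HasDerivAt (fun t : ℝ => γ t - (t - u) • γ' u - (((t - u)^2)/2) • γ'' u)
          (γ' x - (1:ℝ) • γ' u - (x - u) • γ'' u) x :=
        ((hderiv x (hJI (hsub hx))).sub
          (((hasDerivAt_id x).sub_const u).smul_const (γ' u))).sub (h1.smul_const (γ'' u))
      simpa using h2.hasDerivWithinAt
    have hbound : ∀ x ∈ Set.uIcc u v, ‖γ' x - γ' u - (x - u) • γ'' u‖ ≤ ω * |v - u| := by
      intro x hx
      have h3 := hTa x (hsub hx)
      have h4 : |x - u| ≤ |v - u| := abs_sub_le_of_mem_uIcc' hx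
      have heq : γ' x - γ' u - (x - u) • γ'' u = (γ' x - (x - u) • γ'' u) - γ' u := by abel
      rw [heq]
      exact h3.trans (mul_le_mul_of_nonneg_left h4 hω0.le)
    have h5 := hconv.norm_image_sub_le_of_norm_hasDerivWithin_le hder hbound
      Set.left_mem_uIcc Set.right_mem_uIcc
    simp only [sub_self, zero_smul, sub_zero, ne_eq, OfNat.ofNat_ne_zero,
      not_false_eq_true, zero_pow, zero_div] at h5
    calc ‖(γ v - (v - u) • γ' u - (((v - u)^2)/2) • γ'' u) - γ u‖
        ≤ ω * |v - u| * ‖v - u‖ := h5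
      _ = ω * (v - u)^2 := by rw [Real.norm_eq_abs, mul_assoc, abs_mul_abs_self, sq]
  -- two-sided chord comparison on J
  have hchord2 : ∀ v ∈ J, (1 - (W/2+1)*δ) * |v - u| ≤ ‖γ u - γ v‖ ∧
      ‖γ u - γ v‖ ≤ (1 + (W/2+1)*δ) * |v - u| := by
    clear_value F
    clear hfrac hAESM
    intro v hv
    have h6 := hTb v hv
    have heq : (γ u - γ v) + (v - u) • γ' u
        = -((γ v - (v - u) • γ' u - (((v - u)^2)/2) • γ'' u) - γ u) - (((v - u)^2)/2) • γ'' u := by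
      abel
    have h7 : ‖(γ u - γ v) + (v - u) • γ' u‖ ≤ (W/2+1) * (v - u)^2 := by
      rw [heq]
      calc ‖-((γ v - (v - u) • γ' u - (((v - u)^2)/2) • γ'' u) - γ u) - (((v - u)^2)/2) • γ'' u‖
          ≤ ‖-((γ v - (v - u) • γ' u - (((v - u)^2)/2) • γ'' u) - γ u)‖
            + ‖(((v - u)^2)/2) • γ'' u‖ := norm_sub_le _ _
        _ ≤ ω * (v - u)^2 + |((v - u)^2)/2| * W := by
            rw [norm_neg, norm_smul, Real.norm_eq_abs]
            exact add_le_add h6 (le_refl _)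
        _ ≤ (W/2+1) * (v - u)^2 := by
            rw [abs_of_nonneg (by positivity : (0:ℝ) ≤ ((v - u)^2)/2)]
            have h15 : ω*(v-u)^2 ≤ (v-u)^2 := by
              have := mul_le_mul_of_nonneg_right hω1 (sq_nonneg (v-u))
              linarith
            linarith [h15]
    have h8 : ‖(v - u) • γ' u‖ = |v - u| := by
      rw [norm_smul, Real.norm_eq_abs, harc u huI, mul_one]
    have h9 : abs (‖γ u - γ v‖ - |v - u|) ≤ (W/2+1)*δ * |v - u| := by
      have h10 : |‖γ u - γ v‖ - ‖(v - u) • γ' u‖| ≤ ‖(γ u - γ v) + (v - u) • γ' u‖ := by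
        have := abs_norm_sub_norm_le (γ u - γ v) (-((v - u) • γ' u))
        rwa [norm_neg, sub_neg_eq_add] at this
      rw [h8] at h10
      have h11 : (v - u)^2 ≤ δ * |v - u| := by
        have h12 : |v - u| ≤ δ := by
          rw [hJdef, Set.mem_Icc] at hv
          exact abs_le.2 ⟨by linarith [hv.1], by linarith [hv.2]⟩
        calc (v - u)^2 = |v - u| * |v - u| := by rw [abs_mul_abs_self, sq]
          _ ≤ δ * |v - u| := mul_le_mul_of_nonneg_right h12 (abs_nonneg _)
      calc abs (‖γ u - γ v‖ - |v - u|) ≤ (W/2+1) * (v - u)^2 := h10.trans h7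
        _ ≤ (W/2+1) * (δ * |v - u|) := mul_le_mul_of_nonneg_left h11 (by linarith)
        _ = (W/2+1)*δ * |v - u| := by ring
    have h13 := abs_le.1 h9
    constructor
    · have h14 : (1 - (W/2+1)*δ) * |v - u| = |v - u| - (W/2+1)*δ * |v - u| := by ring
      rw [h14]
      linarith [h13.1]
    · have h14 : (1 + (W/2+1)*δ) * |v - u| = |v - u| + (W/2+1)*δ * |v - u| := by ring
      rw [h14]
      linarith [h13.2]
  -- eventual facts
  have hδrpow_cont : Continuous (fun s : ℝ => δ ^ (1 - s)) := by
    have hfun : (fun s : ℝ => δ ^ (1 - s)) = fun s => Real.exp (Real.log δ * (1 - s)) := by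
      funext s
      rw [Real.rpow_def_of_pos hδpos]
    rw [hfun]
    exact Real.continuous_exp.comp (continuous_const.mul (continuous_const.sub continuous_id))
  obtain ⟨m, hm, hmle⟩ := hfarmin δ hδpos hδ1
  set M₀ : ℝ := 2 * (1 + m⁻¹)^2 with hM₀def
  have hM₀ : 0 ≤ M₀ := by positivity
  have hev0 : ∀ᶠ s in 𝓝[<] (1:ℝ), s < 1 := by
    filter_upwards [self_mem_nhdsWithin] with s hs using hs
  have hev1 : ∀ᶠ s in 𝓝[<] (1:ℝ), 1/2 < s :=
    eventually_nhdsWithin_of_eventually_nhds (eventually_gt_nhds (by norm_num))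
  have hev2 : ∀ᶠ s in 𝓝[<] (1:ℝ), W * |1 - s * δ ^ (1 - s)| < ε/3 := by
    have hc : Continuous (fun s : ℝ => W * |1 - s * δ ^ (1 - s)|) :=
      continuous_const.mul ((continuous_const.sub (continuous_id.mul hδrpow_cont)).abs)
    have ht : Filter.Tendsto (fun s : ℝ => W * |1 - s * δ ^ (1 - s)|) (𝓝[<] (1:ℝ)) (𝓝 0) := by
      have h0 : W * |1 - 1 * δ ^ (1 - (1:ℝ))| = 0 := by
        norm_num [Real.rpow_zero]
      have := hc.tendsto 1
      rw [h0] at this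
      exact this.mono_left nhdsWithin_le_nhds
    exact ht.eventually_lt_const (by positivity)
  have hev3 : ∀ᶠ s in 𝓝[<] (1:ℝ), (1 - s) * (M₀ * ℓ) < ε/3 := by
    have hc : Continuous (fun s : ℝ => (1 - s) * (M₀ * ℓ)) :=
      (continuous_const.sub continuous_id).mul continuous_const
    have ht : Filter.Tendsto (fun s : ℝ => (1 - s) * (M₀ * ℓ)) (𝓝[<] (1:ℝ)) (𝓝 0) := by
      have := hc.tendsto 1
      norm_num at this
      exact this.mono_left nhdsWithin_le_nhds
    exact ht.eventually_lt_const (by positivity)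
  filter_upwards [hev0, hev1, hev2, hev3] with s hs1 hshalf hevW hevM
  -- now s is fixed with 1/2 < s < 1
  have hs0 : 0 < s := by linarith
  have hs2 : (0:ℝ) ≤ 2 + s := by linarith
  have h1s : 0 < 1 - s := by linarith
  -- pointwise estimate on J
  have hpt : ∀ v ∈ J, v ≠ u →
      ‖F s v + |v - u| ^ (-s) • ((2:ℝ)⁻¹ • γ'' u)‖ ≤ ε₂ * |v - u| ^ (-s) := by
    clear hfrac hAESM
    intro v hvJ hvu
    have hvI := hJI hvJ
    have htne : v - u ≠ 0 := sub_ne_zero.2 hvu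
    have hT : 0 < |v - u| := abs_pos.2 htne
    have htδ : |v - u| ≤ δ := by
      rw [hJdef, Set.mem_Icc] at hvJ
      exact abs_le.2 ⟨by linarith [hvJ.1], by linarith [hvJ.2]⟩
    have ht1 : |v - u| ≤ 1 := htδ.trans hδ3
    -- Taylor remainders
    have hn1 : ‖(γ u - γ v) + (v - u) • γ' u + ((v - u)^2/2) • γ'' u‖ ≤ ω * (v - u)^2 := by
      have h6 := hTb v hvJ
      have heq : (γ u - γ v) + (v - u) • γ' u + ((v - u)^2/2) • γ'' u
          = -((γ v - (v - u) • γ' u - (((v - u)^2)/2) • γ'' u) - γ u) := by abel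
      rw [heq, norm_neg]
      exact h6
    have hn2 : ‖γ' v - γ' u - (v - u) • γ'' u‖ ≤ ω * |v - u| := by
      have h3 := hTa v hvJ
      have heq : γ' v - γ' u - (v - u) • γ'' u = (γ' v - (v - u) • γ'' u) - γ' u := by abel
      rw [heq]
      exact h3
    -- inner-product term estimate
    have hNest := algebra_est (γ' u) (γ'' u) (γ u - γ v) (γ' v)
      ((γ u - γ v) + (v - u) • γ' u + ((v - u)^2/2) • γ'' u)
      (γ' v - γ' u - (v - u) • γ'' u) (v - u) ω
      (harc u huI) (harc v hvI) hortho (hchord v hvI) ht1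
      (by abel) hn1 (by abel) hn2
    -- chord bounds
    obtain ⟨hxl, hxu⟩ := hchord2 v hvJ
    have hη0 : (0:ℝ) ≤ (W/2+1)*δ := by positivity
    have hη2 : (W/2+1)*δ ≤ 1/2 := by
      have h14 : (W/2+1)*δ ≤ (W/2+1)*(1/(W+2)) :=
        mul_le_mul_of_nonneg_left hδ5 (by linarith)
      have h15 : (W/2+1)*(1/(W+2)) = 1/2 := by
        field_simp
      linarith
    have hrat := ratio_est (x := ‖γ u - γ v‖) hT hη0 hη2 hs0.le hs1.le hxl hxu
    have hTs : (0:ℝ) < |v - u| ^ (-s) := Real.rpow_pos_of_pos hT _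
    have hxpos : (0:ℝ) < ‖γ u - γ v‖ := by
      have h15 : (0:ℝ) < (1 - (W/2+1)*δ) * |v - u| := mul_pos (by linarith) hT
      linarith [hxl]
    have hcpos : (0:ℝ) < (‖γ u - γ v‖ ^ (2 + s))⁻¹ :=
      inv_pos.2 (Real.rpow_pos_of_pos hxpos _)
    -- |v-u|^2 = (v-u)^2
    have hsqabs : |v - u| ^ 2 = (v - u)^2 := sq_abs _
    -- decompose
    have hdec : F s v + |v - u| ^ (-s) • ((2:ℝ)⁻¹ • γ'' u)
        = (‖γ u - γ v‖ ^ (2 + s))⁻¹ •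
            ((⟪γ u - γ v, γ' u⟫ • γ' v - ⟪γ' u, γ' v⟫ • (γ u - γ v)) + ((v - u)^2/2) • γ'' u)
          + (|v - u| ^ (-s) - (v - u)^2 * (‖γ u - γ v‖ ^ (2 + s))⁻¹) • ((2:ℝ)⁻¹ • γ'' u) := by
      rw [hFdef]
      module
    rw [hdec]
    have hb1 : ‖(‖γ u - γ v‖ ^ (2 + s))⁻¹ •
        ((⟪γ u - γ v, γ' u⟫ • γ' v - ⟪γ' u, γ' v⟫ • (γ u - γ v)) + ((v - u)^2/2) • γ'' u)‖
        ≤ 32 * ω * |v - u| ^ (-s) := by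
      rw [norm_smul, Real.norm_eq_abs, abs_of_pos hcpos]
      have h16 : (v - u)^2 * (‖γ u - γ v‖ ^ (2 + s))⁻¹ ≤ 8 * |v - u| ^ (-s) := by
        have h17 := (abs_le.1 hrat).2
        rw [hsqabs] at h17
        have h18 : 14 * ((W/2+1)*δ) * |v - u| ^ (-s) ≤ 7 * |v - u| ^ (-s) := by
          have h19 := mul_le_mul_of_nonneg_right hη2 hTs.le
          linarith
        linarith [hTs]
      calc (‖γ u - γ v‖ ^ (2 + s))⁻¹ *
            ‖(⟪γ u - γ v, γ' u⟫ • γ' v - ⟪γ' u, γ' v⟫ • (γ u - γ v)) + ((v - u)^2/2) • γ'' u‖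
          ≤ (‖γ u - γ v‖ ^ (2 + s))⁻¹ * (4 * ω * (v - u)^2) :=
            mul_le_mul_of_nonneg_left hNest hcpos.le
        _ = 4 * ω * ((v - u)^2 * (‖γ u - γ v‖ ^ (2 + s))⁻¹) := by ring
        _ ≤ 4 * ω * (8 * |v - u| ^ (-s)) :=
            mul_le_mul_of_nonneg_left h16 (by positivity)
        _ = 32 * ω * |v - u| ^ (-s) := by ring
    have hb2 : ‖(|v - u| ^ (-s) - (v - u)^2 * (‖γ u - γ v‖ ^ (2 + s))⁻¹) • ((2:ℝ)⁻¹ • γ'' u)‖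
        ≤ 7 * ((W/2+1)*δ) * W * |v - u| ^ (-s) := by
      rw [norm_smul, norm_smul, Real.norm_eq_abs, Real.norm_eq_abs]
      have h18 : |(|v - u| ^ (-s) - (v - u)^2 * (‖γ u - γ v‖ ^ (2 + s))⁻¹)|
          ≤ 14 * ((W/2+1)*δ) * |v - u| ^ (-s) := by
        rw [abs_sub_comm]
        rw [hsqabs] at hrat
        exact hrat
      calc |(|v - u| ^ (-s) - (v - u)^2 * (‖γ u - γ v‖ ^ (2 + s))⁻¹)| * (|(2:ℝ)⁻¹| * W)
          ≤ (14 * ((W/2+1)*δ) * |v - u| ^ (-s)) * (|(2:ℝ)⁻¹| * W) := by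
            apply mul_le_mul_of_nonneg_right h18 (by positivity)
        _ = 7 * ((W/2+1)*δ) * W * |v - u| ^ (-s) := by
            rw [abs_of_pos (by norm_num : (0:ℝ) < (2:ℝ)⁻¹)]
            ring
    have hb3 : 32 * ω * |v - u| ^ (-s) ≤ (ε₂/2) * |v - u| ^ (-s) := by
      apply mul_le_mul_of_nonneg_right _ hTs.le
      linarith
    have hb4 : 7 * ((W/2+1)*δ) * W * |v - u| ^ (-s) ≤ (ε₂/2) * |v - u| ^ (-s) := by
      apply mul_le_mul_of_nonneg_right _ hTs.le
      have h19 : 7 * (W/2+1) * W * δ ≤ 7 * (W/2+1) * W * (ε₂/(14 * (W/2+1) * (W+1))) :=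
        mul_le_mul_of_nonneg_left hδ6 (by positivity)
      have h20 : 7 * (W/2+1) * W * (ε₂/(14 * (W/2+1) * (W+1))) = ε₂ * (W / (2*(W+1))) := by
        field_simp
        ring
      have h21 : W / (2*(W+1)) ≤ 1/2 := by
        rw [div_le_iff₀ (by positivity)]
        linarith
      have h22 : ε₂ * (W / (2*(W+1))) ≤ ε₂ * (1/2) :=
        mul_le_mul_of_nonneg_left h21 hε₂.le
      calc 7 * ((W/2+1)*δ) * W = 7 * (W/2+1) * W * δ := by ring
        _ ≤ 7 * (W/2+1) * W * (ε₂/(14 * (W/2+1) * (W+1))) := h19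
        _ = ε₂ * (W / (2*(W+1))) := h20
        _ ≤ ε₂ * (1/2) := h22
        _ = ε₂/2 := by ring
    calc ‖(‖γ u - γ v‖ ^ (2 + s))⁻¹ •
            ((⟪γ u - γ v, γ' u⟫ • γ' v - ⟪γ' u, γ' v⟫ • (γ u - γ v)) + ((v - u)^2/2) • γ'' u)
          + (|v - u| ^ (-s) - (v - u)^2 * (‖γ u - γ v‖ ^ (2 + s))⁻¹) • ((2:ℝ)⁻¹ • γ'' u)‖
        ≤ 32 * ω * |v - u| ^ (-s) + 7 * ((W/2+1)*δ) * W * |v - u| ^ (-s) :=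
          (norm_add_le _ _).trans (add_le_add hb1 hb2)
      _ ≤ (ε₂/2) * |v - u| ^ (-s) + (ε₂/2) * |v - u| ^ (-s) := add_le_add hb3 hb4
      _ = ε₂ * |v - u| ^ (-s) := by ring
  -- integrability on J
  have hg_int : MeasureTheory.IntegrableOn (fun v : ℝ => |v - u| ^ (-s)) J volume :=
    integrableOn_abs_rpow_Icc hs0 hs1 hδpos
  have hFzero : F s u = 0 := by
    rw [hFdef]
    simp [Real.zero_rpow (by positivity : (2:ℝ) + s ≠ 0)]
  have hIntJ : MeasureTheory.IntegrableOn (F s) J volume := by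
    apply MeasureTheory.Integrable.mono' (g := fun v => (ε₂ + W/2) * |v - u| ^ (-s))
      (hg_int.const_mul _)
      ((hAESM s hs2).mono_measure (Measure.restrict_mono hJI le_rfl))
    refine (ae_restrict_iff' measurableSet_Icc).2 (Filter.Eventually.of_forall fun v hv => ?_)
    by_cases hvu : v = u
    · subst hvu
      rw [hFzero, norm_zero, sub_self, abs_zero,
        Real.zero_rpow (by intro hcon; linarith : -s ≠ 0)]
      simp
    · have h23 := hpt v hv hvu
      have hTs : (0:ℝ) < |v - u| ^ (-s) :=
        Real.rpow_pos_of_pos (abs_pos.2 (sub_ne_zero.2 hvu)) _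
      have h24 : ‖F s v‖ ≤ ‖F s v + |v - u| ^ (-s) • ((2:ℝ)⁻¹ • γ'' u)‖
          + ‖|v - u| ^ (-s) • ((2:ℝ)⁻¹ • γ'' u)‖ := by
        have := norm_sub_le (F s v + |v - u| ^ (-s) • ((2:ℝ)⁻¹ • γ'' u))
          (|v - u| ^ (-s) • ((2:ℝ)⁻¹ • γ'' u))
        simpa using this
      have h25 : ‖|v - u| ^ (-s) • ((2:ℝ)⁻¹ • γ'' u)‖ = |v - u| ^ (-s) * (W/2) := by
        rw [norm_smul, norm_smul, Real.norm_eq_abs, Real.norm_eq_abs,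
          abs_of_pos hTs, abs_of_pos (by norm_num : (0:ℝ) < (2:ℝ)⁻¹), ← hWdef]
        ring
      calc ‖F s v‖ ≤ ε₂ * |v - u| ^ (-s) + |v - u| ^ (-s) * (W/2) := by
            linarith [h23, h24, le_of_eq h25]
        _ = (ε₂ + W/2) * |v - u| ^ (-s) := by ring
  -- far region bound and integrability
  have hfarb : ∀ v ∈ I \ J, ‖F s v‖ ≤ M₀ := by
    clear hfrac hAESM hpt hIntJ
    intro v hv
    have hvI := hv.1
    have hδv : δ ≤ |v - u| := by
      have := hv.2
      rw [hJdef, Set.mem_Icc] at this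
      push_neg at this
      rcases le_or_gt (u - δ) v with h | h
      · have := this h
        rw [abs_of_pos (by linarith)]
        linarith
      · rw [abs_of_neg (by linarith)]
        linarith
    have hmx : m ≤ ‖γ u - γ v‖ := hmle v hvI hδv
    have hxpos : (0:ℝ) < ‖γ u - γ v‖ := lt_of_lt_of_le hm hmx
    have hNb : ‖⟪γ u - γ v, γ' u⟫ • γ' v - ⟪γ' u, γ' v⟫ • (γ u - γ v)‖
        ≤ 2 * ‖γ u - γ v‖ := by
      calc ‖⟪γ u - γ v, γ' u⟫ • γ' v - ⟪γ' u, γ' v⟫ • (γ u - γ v)‖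
          ≤ ‖⟪γ u - γ v, γ' u⟫ • γ' v‖ + ‖⟪γ' u, γ' v⟫ • (γ u - γ v)‖ := norm_sub_le _ _
        _ ≤ ‖γ u - γ v‖ * 1 + 1 * ‖γ u - γ v‖ := by
            rw [norm_smul, norm_smul, Real.norm_eq_abs, Real.norm_eq_abs]
            apply add_le_add
            · apply mul_le_mul _ (le_of_eq (harc v hvI)) (norm_nonneg _) (norm_nonneg _)
              calc |⟪γ u - γ v, γ' u⟫| ≤ ‖γ u - γ v‖ * ‖γ' u‖ := abs_real_inner_le_norm _ _
                _ = ‖γ u - γ v‖ := by rw [harc u huI, mul_one]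
            · apply mul_le_mul _ (le_refl _) (norm_nonneg _) zero_le_one
              calc |⟪γ' u, γ' v⟫| ≤ ‖γ' u‖ * ‖γ' v‖ := abs_real_inner_le_norm _ _
                _ = 1 := by rw [harc u huI, harc v hvI, mul_one]
        _ = 2 * ‖γ u - γ v‖ := by ring
    have hpow : ‖γ u - γ v‖ ^ (2 + s) = ‖γ u - γ v‖ ^ (1 + s) * ‖γ u - γ v‖ := by
      rw [show (2:ℝ) + s = (1 + s) + 1 by ring, Real.rpow_add hxpos, Real.rpow_one]
    have hF1 : ‖F s v‖ ≤ 2 * (‖γ u - γ v‖ ^ (1 + s))⁻¹ := by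
      rw [hFdef]
      simp only
      rw [norm_smul, Real.norm_eq_abs,
        abs_of_pos (inv_pos.2 (Real.rpow_pos_of_pos hxpos _))]
      calc (‖γ u - γ v‖ ^ (2 + s))⁻¹ * ‖⟪γ u - γ v, γ' u⟫ • γ' v - ⟪γ' u, γ' v⟫ • (γ u - γ v)‖
          ≤ (‖γ u - γ v‖ ^ (2 + s))⁻¹ * (2 * ‖γ u - γ v‖) :=
            mul_le_mul_of_nonneg_left hNb (by positivity)
        _ = 2 * (‖γ u - γ v‖ ^ (1 + s))⁻¹ := by
            rw [hpow]
            have h1 : ‖γ u - γ v‖ ≠ 0 := ne_of_gt hxpos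
            have h2 : ‖γ u - γ v‖ ^ (1 + s) ≠ 0 :=
              ne_of_gt (Real.rpow_pos_of_pos hxpos _)
            field_simp
    have hF2 : (‖γ u - γ v‖ ^ (1 + s))⁻¹ ≤ (m ^ (1 + s))⁻¹ := by
      apply inv_anti₀ (Real.rpow_pos_of_pos hm _)
      exact Real.rpow_le_rpow hm.le hmx (by linarith)
    have hF3 : (m ^ (1 + s))⁻¹ ≤ (1 + m⁻¹)^2 := by
      rw [← Real.inv_rpow hm.le]
      rcases le_total (m⁻¹) 1 with h | h
      · calc (m⁻¹) ^ (1 + s) ≤ (1:ℝ) ^ (1 + s) :=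
              Real.rpow_le_rpow (by positivity) h (by linarith)
          _ = 1 := Real.one_rpow _
          _ ≤ (1 + m⁻¹)^2 := by nlinarith [inv_pos.2 hm, sq_nonneg m⁻¹]
      · calc (m⁻¹) ^ (1 + s) ≤ (m⁻¹) ^ ((2:ℝ)) :=
              Real.rpow_le_rpow_of_exponent_le h (by linarith)
          _ = (m⁻¹) ^ (2:ℕ) := by
              rw [← Real.rpow_natCast m⁻¹ 2]; norm_num
          _ ≤ (1 + m⁻¹)^2 := by nlinarith [inv_pos.2 hm]
    calc ‖F s v‖ ≤ 2 * (‖γ u - γ v‖ ^ (1 + s))⁻¹ := hF1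
      _ ≤ 2 * (m ^ (1 + s))⁻¹ := by linarith [hF2]
      _ ≤ 2 * (1 + m⁻¹)^2 := by linarith [hF3]
      _ = M₀ := by rw [hM₀def]
  have hμfar : volume (I \ J) < ⊤ := by
    apply lt_of_le_of_lt (measure_mono Set.diff_subset)
    rw [hIdef, Real.volume_Icc]
    exact ENNReal.ofReal_lt_top
  have hIntFar : MeasureTheory.IntegrableOn (F s) (I \ J) volume := by
    apply MeasureTheory.Integrable.mono' (g := fun _ => M₀)
      (MeasureTheory.integrableOn_const hμfar.ne)
      ((hAESM s hs2).mono_measure (Measure.restrict_mono Set.diff_subset le_rfl))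
    exact (ae_restrict_iff' (hImeas.diff measurableSet_Icc)).2
      (Filter.Eventually.of_forall hfarb)
  have hIntI : MeasureTheory.IntegrableOn (F s) I volume := by
    have h := hIntJ.union hIntFar
    rwa [Set.union_diff_cancel hJI] at h
  -- split the integral
  have hsplit : ∫ v in I, F s v = (∫ v in J, F s v) + ∫ v in I \ J, F s v := by
    have h := MeasureTheory.integral_diff measurableSet_Icc hIntI hJI
    rw [h]
    abel
  -- the main near-diagonal integral estimate
  have hA : ∫ v in J, |v - u| ^ (-s) = 2 * (δ ^ (1 - s) / (1 - s)) :=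
    integral_abs_rpow_Icc hs0 hs1 hδpos
  have hsum : ∫ v in J, (F s v + |v - u| ^ (-s) • ((2:ℝ)⁻¹ • γ'' u))
      = (∫ v in J, F s v) + (2 * (δ ^ (1 - s) / (1 - s))) • ((2:ℝ)⁻¹ • γ'' u) := by
    rw [MeasureTheory.integral_add hIntJ (hg_int.smul_const _),
      integral_smul_const, hA]
  have hbnd : ‖(∫ v in J, F s v) + (2 * (δ ^ (1 - s) / (1 - s))) • ((2:ℝ)⁻¹ • γ'' u)‖
      ≤ ε₂ * (2 * (δ ^ (1 - s) / (1 - s))) := by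
    rw [← hsum]
    have h9 : ∀ᵐ v ∂(volume.restrict J),
        ‖F s v + |v - u| ^ (-s) • ((2:ℝ)⁻¹ • γ'' u)‖ ≤ ε₂ * |v - u| ^ (-s) := by
      refine (ae_restrict_iff' measurableSet_Icc).2 (Filter.Eventually.of_forall fun v hv => ?_)
      by_cases hvu : v = u
      · subst hvu
        rw [hFzero, sub_self, abs_zero, Real.zero_rpow (by intro hcon; linarith : -s ≠ 0)]
        simp
      · exact hpt v hv hvu
    calc ‖∫ v in J, (F s v + |v - u| ^ (-s) • ((2:ℝ)⁻¹ • γ'' u))‖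
        ≤ ∫ v in J, ε₂ * |v - u| ^ (-s) :=
          MeasureTheory.norm_integral_le_of_norm_le (hg_int.const_mul ε₂) h9
      _ = ε₂ * ∫ v in J, |v - u| ^ (-s) := integral_const_mul ε₂ _
      _ = ε₂ * (2 * (δ ^ (1 - s) / (1 - s))) := by rw [hA]
  -- far integral bound
  have hCbnd : ‖∫ v in I \ J, F s v‖ ≤ M₀ * ℓ := by
    have h := MeasureTheory.norm_setIntegral_le_of_norm_le_const (C := M₀) hμfar hfarb
    have hμ : (volume (I \ J)).toReal ≤ ℓ := by
      have h1 : volume (I \ J) ≤ volume I := measure_mono Set.diff_subset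
      have h2 : volume I = ENNReal.ofReal ℓ := by
        rw [hIdef, Real.volume_Icc]
        congr 1
        ring
      calc (volume (I \ J)).toReal ≤ (volume I).toReal := by
            apply ENNReal.toReal_mono _ h1
            rw [h2]
            exact ENNReal.ofReal_ne_top
        _ = ℓ := by rw [h2, ENNReal.toReal_ofReal hℓ.le]
    calc ‖∫ v in I \ J, F s v‖ ≤ M₀ * (volume (I \ J)).toReal := h
      _ ≤ M₀ * ℓ := mul_le_mul_of_nonneg_left hμ hM₀
  -- assemble
  rw [dist_eq_norm, hfrac s, hsplit, sub_neg_eq_add]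
  have hid : (1 - s) • (s • ((∫ v in J, F s v) + ∫ v in I \ J, F s v)) + γ'' u
      = ((1 - s) * s) • ((∫ v in J, F s v)
          + (2 * (δ ^ (1 - s) / (1 - s))) • ((2:ℝ)⁻¹ • γ'' u))
        + (1 - (1 - s) * s * ((2 * (δ ^ (1 - s) / (1 - s)))/2)) • γ'' u
        + ((1 - s) * s) • (∫ v in I \ J, F s v) := by
    module
  rw [hid]
  have hδa : (0:ℝ) < δ ^ (1 - s) := Real.rpow_pos_of_pos hδpos _
  have hδa1 : δ ^ (1 - s) ≤ 1 := Real.rpow_le_one hδpos.le hδ3 (by linarith)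
  have hcoef : 1 - (1 - s) * s * ((2 * (δ ^ (1 - s) / (1 - s)))/2) = 1 - s * δ ^ (1 - s) := by
    field_simp
  rw [hcoef]
  have hX1 : ‖((1 - s) * s) • ((∫ v in J, F s v)
      + (2 * (δ ^ (1 - s) / (1 - s))) • ((2:ℝ)⁻¹ • γ'' u))‖ ≤ 2 * ε₂ := by
    rw [norm_smul, Real.norm_eq_abs, abs_of_pos (mul_pos h1s hs0)]
    have h30 : s * δ ^ (1 - s) ≤ 1 := mul_le_one₀ hs1.le hδa.le hδa1
    calc (1 - s) * s * ‖(∫ v in J, F s v)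
          + (2 * (δ ^ (1 - s) / (1 - s))) • ((2:ℝ)⁻¹ • γ'' u)‖
        ≤ (1 - s) * s * (ε₂ * (2 * (δ ^ (1 - s) / (1 - s)))) :=
          mul_le_mul_of_nonneg_left hbnd (mul_pos h1s hs0).le
      _ = 2 * ε₂ * (s * δ ^ (1 - s)) := by
          field_simp
      _ ≤ 2 * ε₂ * 1 := mul_le_mul_of_nonneg_left h30 (by positivity)
      _ = 2 * ε₂ := by ring
  have hX2 : ‖(1 - s * δ ^ (1 - s)) • γ'' u‖ = |1 - s * δ ^ (1 - s)| * W := by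
    rw [norm_smul, Real.norm_eq_abs, hWdef]
  have hX3 : ‖((1 - s) * s) • (∫ v in I \ J, F s v)‖ ≤ (1 - s) * (M₀ * ℓ) := by
    rw [norm_smul, Real.norm_eq_abs, abs_of_pos (mul_pos h1s hs0)]
    have hK : (0:ℝ) ≤ M₀ * ℓ := mul_nonneg hM₀ hℓ.le
    have h31 : s * (M₀ * ℓ) ≤ M₀ * ℓ := mul_le_of_le_one_left hK hs1.le
    calc (1 - s) * s * ‖∫ v in I \ J, F s v‖ ≤ (1 - s) * s * (M₀ * ℓ) :=
          mul_le_mul_of_nonneg_left hCbnd (mul_pos h1s hs0).le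
      _ = (1 - s) * (s * (M₀ * ℓ)) := by ring
      _ ≤ (1 - s) * (M₀ * ℓ) := mul_le_mul_of_nonneg_left h31 h1s.le
  calc ‖((1 - s) * s) • ((∫ v in J, F s v)
          + (2 * (δ ^ (1 - s) / (1 - s))) • ((2:ℝ)⁻¹ • γ'' u))
        + (1 - s * δ ^ (1 - s)) • γ'' u
        + ((1 - s) * s) • (∫ v in I \ J, F s v)‖
      ≤ ‖((1 - s) * s) • ((∫ v in J, F s v)
          + (2 * (δ ^ (1 - s) / (1 - s))) • ((2:ℝ)⁻¹ • γ'' u))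
        + (1 - s * δ ^ (1 - s)) • γ'' u‖
        + ‖((1 - s) * s) • (∫ v in I \ J, F s v)‖ := norm_add_le _ _
    _ ≤ ‖((1 - s) * s) • ((∫ v in J, F s v)
          + (2 * (δ ^ (1 - s) / (1 - s))) • ((2:ℝ)⁻¹ • γ'' u))‖
        + ‖(1 - s * δ ^ (1 - s)) • γ'' u‖
        + ‖((1 - s) * s) • (∫ v in I \ J, F s v)‖ := by
        linarith [norm_add_le (((1 - s) * s) • ((∫ v in J, F s v)
          + (2 * (δ ^ (1 - s) / (1 - s))) • ((2:ℝ)⁻¹ • γ'' u)))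
          ((1 - s * δ ^ (1 - s)) • γ'' u)]
    _ ≤ 2 * ε₂ + |1 - s * δ ^ (1 - s)| * W + (1 - s) * (M₀ * ℓ) := by
        rw [hX2] at *
        linarith [hX1, hX3]
    _ < ε := by
        rw [hε₂def]
        have hWc : |1 - s * δ ^ (1 - s)| * W = W * |1 - s * δ ^ (1 - s)| := by ring
        rw [hWc]
        linarith [hevW, hevM]
end
end
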